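/- arXiv:2512.10053 — 2 statements merged into one kernel-verified Lean document; each statement's English description precedes it below -/
import Mathlib

section
/- A function f : ℝ⁴ → ℝ on confusion-matrix entries (TP, FP, FN, TN) satisfies f(TP, FP, FN, TN) = f(TP + δ₁, FP − δ₂, FN + δ₂, TN − δ₁) for all real δ₁, δ₂ if and only if there exists a function g : ℝ² → ℝ such that f(TP, FP, FN, TN) = g(TP + TN, FP + FN) for all TP, FP, FN, TN. -/
/-- LxC-invariance characterization for categorical metrics. -/
theorem stmt_0 (f : ℝ → ℝ → ℝ → ℝ → ℝ) :
    (∀ TP FP FN TN δ₁ δ₂ : ℝ,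
        f TP FP FN TN = f (TP + δ₁) (FP - δ₂) (FN + δ₂) (TN - δ₁)) ↔
    (∃ g : ℝ → ℝ → ℝ, ∀ TP FP FN TN : ℝ,
        f TP FP FN TN = g (TP + TN) (FP + FN)) := by
  constructor
  · intro h
    refine ⟨fun c i => f c i 0 0, fun TP FP FN TN => ?_⟩
    have := h TP FP FN TN TN (-FN)
    simpa using this
  · rintro ⟨g, hg⟩ TP FP FN TN δ₁ δ₂
    rw [hg, hg]; ring_nf
end

section
/- Let y : [0,1] → {0,1} be measurable, G(t) = ∫₀ᵗ y(w) dw, and H = ∫₀¹ G(t)(1 − y(t)) dt. Then 2∫₀¹ G(t) dt = G(1)² + 2H. -/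
open MeasureTheory Set intervalIntegral

/-- Self-convolution symmetry: ∫ z(t)·(∫_{w≤t} z) dt = (∫z)²/2. -/
lemma key_half (z : ℝ → ℝ) (hm : Measurable z) (hint : Integrable z) :
    ∫ t, z t * ∫ w in Iic t, z w = (∫ t, z t) ^ 2 / 2 := by
  set F : ℝ → ℝ := fun t => ∫ w in Iic t, z w with hF
  have hFcont : Continuous F := by
    have h1 : Continuous fun t : ℝ => ∫ w in (0:ℝ)..t, z w :=
      hint.continuous_primitive 0
    have : F = fun t => (∫ w in Iic (0:ℝ), z w) + ∫ w in (0:ℝ)..t, z w := by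
      funext t
      rw [← intervalIntegral.integral_Iic_sub_Iic (hint.integrableOn) (hint.integrableOn)]
      ring
    rw [this]
    exact continuous_const.add h1
  have hFbound : ∀ t, |F t| ≤ ∫ w, |z w| := by
    intro t
    calc |F t| ≤ ∫ w in Iic t, |z w| := by
          simpa using MeasureTheory.norm_integral_le_integral_norm (μ := volume.restrict (Iic t)) z
      _ ≤ ∫ w, |z w| := by
          apply setIntegral_le_integral hint.abs
          filter_upwards with w using abs_nonneg _
  -- integrability of products
  have hintzF : Integrable (fun t => z t * F t) := by
    refine Integrable.mono' (g := fun t => |z t| * ∫ w, |z w|)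
      (hint.abs.mul_const _) (hm.aestronglyMeasurable.mul hFcont.measurable.aestronglyMeasurable) ?_
    filter_upwards with t
    rw [Real.norm_eq_abs, abs_mul]
    exact mul_le_mul_of_nonneg_left (hFbound t) (abs_nonneg _)
  -- A + B = I^2
  set A := ∫ t, z t * F t with hA
  set B := ∫ t, z t * ∫ w in Ioi t, z w with hB
  have hintzG : Integrable (fun t => z t * ∫ w in Ioi t, z w) := by
    have : (fun t => z t * ∫ w in Ioi t, z w)
        = fun t => z t * (∫ w, z w) - z t * F t := by
      funext t
      rw [← intervalIntegral.integral_Iic_add_Ioi (hint.integrableOn) (hint.integrableOn)]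
      ring
    rw [this]
    exact (hint.mul_const _).sub hintzF
  have hsum : A + B = (∫ t, z t) ^ 2 := by
    rw [hA, hB, ← integral_add hintzF hintzG]
    have : ∀ t, z t * F t + z t * ∫ w in Ioi t, z w = z t * ∫ w, z w := by
      intro t
      rw [← mul_add, intervalIntegral.integral_Iic_add_Ioi (hint.integrableOn) (hint.integrableOn)]
    simp only [this]
    rw [MeasureTheory.integral_mul_const]
    ring
  -- A = B by Fubini
  have hAeqB : A = B := by
    have hprod : Integrable (fun p : ℝ × ℝ => z p.1 * z p.2) (volume.prod volume) :=
      hint.mul_prod hint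
    have hmeas_lt : MeasurableSet {p : ℝ × ℝ | p.2 < p.1} :=
      measurableSet_lt measurable_snd measurable_fst
    have hmeas_lt' : MeasurableSet {p : ℝ × ℝ | p.1 < p.2} :=
      measurableSet_lt measurable_fst measurable_snd
    have h1 : A = ∫ t, ∫ w, {p : ℝ × ℝ | p.2 < p.1}.indicator
        (fun p => z p.1 * z p.2) (t, w) := by
      rw [hA]
      congr 1; funext t
      have : (fun w => {p : ℝ × ℝ | p.2 < p.1}.indicator (fun p => z p.1 * z p.2) (t, w))
          = (Iio t).indicator (fun w => z t * z w) := by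
        funext w
        by_cases h : w < t <;> simp [Set.indicator_apply, h]
      rw [this, MeasureTheory.integral_indicator measurableSet_Iio,
        MeasureTheory.integral_const_mul, ← MeasureTheory.integral_Iic_eq_integral_Iio]
    have h2 : B = ∫ w, ∫ t, {p : ℝ × ℝ | p.2 < p.1}.indicator
        (fun p => z p.1 * z p.2) (t, w) := by
      rw [hB]
      congr 1; funext w
      have : (fun t => {p : ℝ × ℝ | p.2 < p.1}.indicator (fun p => z p.1 * z p.2) (t, w))
          = (Ioi w).indicator (fun t => z w * z t) := by
        funext t
        by_cases h : w < t <;> simp [Set.indicator_apply, h, mul_comm]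
      rw [this, MeasureTheory.integral_indicator measurableSet_Ioi,
        MeasureTheory.integral_const_mul]
    rw [h1, h2]
    exact MeasureTheory.integral_integral_swap
      ((hprod.indicator hmeas_lt))
  nlinarith [hsum, hAeqB]

/-- 2∫₀¹ G = G(1)² + 2H with H = ∫₀¹ G·(1−y), for G(t) = ∫₀ᵗ y
(LxCIM = ACC² + 2H). -/
theorem stmt_11 (y : ℝ → ℝ) (hmeas : Measurable y)
    (hvals : ∀ t, y t = 0 ∨ y t = 1) :
    let G : ℝ → ℝ := fun t => ∫ w in (0 : ℝ)..t, y w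
    let H : ℝ := ∫ t in (0 : ℝ)..1, G t * (1 - y t)
    2 * ∫ t in (0 : ℝ)..1, G t = G 1 ^ 2 + 2 * H := by
  intro G H
  have hy01 : ∀ t, 0 ≤ y t ∧ y t ≤ 1 := by
    intro t; rcases hvals t with h | h <;> simp [h]
  have hybnd : ∀ t, ‖y t‖ ≤ 1 := by
    intro t; rw [Real.norm_eq_abs, abs_le]; constructor <;> nlinarith [hy01 t]
  -- y is interval integrable on any interval
  have hyIntOn : ∀ a b : ℝ, IntegrableOn y (Ioc a b) := by
    intro a b
    refine Integrable.mono' (g := fun _ => (1:ℝ)) (integrable_const 1)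
      hmeas.aestronglyMeasurable.restrict ?_
    filter_upwards with t using hybnd t
  have hyII : ∀ a b : ℝ, IntervalIntegrable y volume a b := by
    intro a b
    constructor <;> exact hyIntOn _ _
  set z : ℝ → ℝ := (Ioc (0:ℝ) 1).indicator y with hz
  have hzmeas : Measurable z := hmeas.indicator measurableSet_Ioc
  have hzint : Integrable z := (hyIntOn 0 1).integrable_indicator measurableSet_Ioc
  have hI : (∫ t, z t) = G 1 := by
    rw [hz, MeasureTheory.integral_indicator measurableSet_Ioc]
    simp only [G]
    rw [intervalIntegral.integral_of_le (by norm_num : (0:ℝ) ≤ 1)]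
  -- F = ∫_{Iic t} z equals G t on Ioc 0 1
  have hF : ∀ t ∈ Ioc (0:ℝ) 1, (∫ w in Iic t, z w) = G t := by
    intro t ht
    rw [hz, MeasureTheory.integral_indicator measurableSet_Ioc,
      Measure.restrict_restrict measurableSet_Ioc, Set.Ioc_inter_Iic,
      min_eq_right ht.2]
    simp only [G]
    rw [intervalIntegral.integral_of_le ht.1.le]
  -- key identity
  have hkey := key_half z hzmeas hzint
  have hGy : (∫ t in (0:ℝ)..1, G t * y t) = G 1 ^ 2 / 2 := by
    rw [← hI, ← hkey]
    rw [intervalIntegral.integral_of_le (by norm_num : (0:ℝ) ≤ 1)]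
    rw [show (∫ t, z t * ∫ w in Iic t, z w)
        = ∫ t, (Ioc (0:ℝ) 1).indicator (fun t => y t * ∫ w in Iic t, z w) t by
      congr 1; funext t
      by_cases h : t ∈ Ioc (0:ℝ) 1 <;> simp [hz, Set.indicator_apply, h]]
    rw [MeasureTheory.integral_indicator measurableSet_Ioc]
    apply MeasureTheory.setIntegral_congr_fun measurableSet_Ioc
    intro t ht
    show G t * y t = y t * ∫ w in Iic t, z w
    rw [hF t ht, mul_comm]
  -- continuity/integrability of G
  have hGcont : Continuous G := intervalIntegral.continuous_primitive (fun a b => hyII a b) 0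
  have hGII : IntervalIntegrable G volume 0 1 := hGcont.intervalIntegrable 0 1
  have hGyII : IntervalIntegrable (fun t => G t * y t) volume 0 1 := by
    constructor <;>
    · refine Integrable.mono' (g := fun t => |G t|)
        (hGcont.abs.integrableOn_Ioc)
        ((hGcont.measurable.aestronglyMeasurable.mul hmeas.aestronglyMeasurable).restrict) ?_
      filter_upwards with t
      rw [Real.norm_eq_abs, abs_mul]
      calc |G t| * |y t| ≤ |G t| * 1 :=
            mul_le_mul_of_nonneg_left (by simpa using hybnd t) (abs_nonneg _)
        _ = |G t| := mul_one _
  have hH : H = (∫ t in (0:ℝ)..1, G t) - ∫ t in (0:ℝ)..1, G t * y t := by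
    simp only [H]
    rw [← intervalIntegral.integral_sub hGII hGyII]
    congr 1; funext t; ring
  rw [hH, hGy]; ring
end
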